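/- If a place p=(I|O) is underfed with respect to log L and threshold τ under the aggregated-fitness criterion, then any place p'=(I|O') with O ⊆ O' is also underfed under the aggregated-fitness criterion (with respect to L and τ). -/

import Mathlib

open scoped Classical

variable {A : Type*} [DecidableEq A]

/-- Number of elements of list `l` that belong to `S`. -/
def cnt (S : Finset A) (l : List A) : ℕ :=
  l.countP (fun a => decide (a ∈ S))

/-- A trace is underfed w.r.t. place `(I|O)` iff at some prefix more tokens are
consumed by `O` than have been produced by `I`. -/
def Underfed (I O : Finset A) (σ : List A) : Prop :=
  ∃ k, 1 ≤ k ∧ k ≤ σ.length ∧ cnt I (σ.take (k - 1)) < cnt O (σ.take k)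

/-- A trace is overfed w.r.t. `(I|O)` iff more tokens are produced than consumed overall. -/
def Overfed (I O : Finset A) (σ : List A) : Prop :=
  cnt O σ < cnt I σ

/-- Fitting = neither underfed nor overfed. -/
def Fitting (I O : Finset A) (σ : List A) : Prop :=
  ¬ Underfed I O σ ∧ ¬ Overfed I O σ

noncomputable def underfedL (L : Multiset (List A)) (I O : Finset A) : Multiset (List A) :=
  L.filter (Underfed I O)

noncomputable def overfedL (L : Multiset (List A)) (I O : Finset A) : Multiset (List A) :=
  L.filter (Overfed I O)

noncomputable def fittingL (L : Multiset (List A)) (I O : Finset A) : Multiset (List A) :=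
  L.filter (Fitting I O)

/-- Traces of `L` activated by the activity set `S`. -/
noncomputable def actL (L : Multiset (List A)) (S : Finset A) : Multiset (List A) :=
  L.filter (fun σ => ∃ a ∈ S, a ∈ σ)

/-- Absolute fitness. -/
noncomputable def fAbs (L : Multiset (List A)) (I O : Finset A) : ℝ :=
  ((fittingL L I O).card : ℝ) / (Multiset.card L : ℝ)

/-- Relative fitness. -/
noncomputable def fRel (L : Multiset (List A)) (I O : Finset A) : ℝ :=
  (((actL L (I ∪ O)) ∩ (fittingL L I O)).card : ℝ) / ((actL L (I ∪ O)).card : ℝ)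

/-- Aggregated fitness. -/
noncomputable def fAgg (L : Multiset (List A)) (I O : Finset A) (h : (I ∪ O).Nonempty) : ℝ :=
  (I ∪ O).inf' h (fun a =>
    (((actL L {a}) ∩ (fittingL L I O)).card : ℝ) / ((actL L {a}).card : ℝ))

/-- Aggregated-underfed criterion w.r.t. a log and threshold `τ`. -/
noncomputable def AggUnderfed (L : Multiset (List A)) (I O : Finset A) (τ : ℝ) : Prop :=
  ∃ a ∈ I ∪ O,
    1 - τ < (((actL L {a}) ∩ underfedL L I O).card : ℝ) / ((actL L {a}).card : ℝ)

theorem agg_underfed_monotone (L : Multiset (List A)) (I O O' : Finset A) (τ : ℝ)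
    (hτ0 : 0 ≤ τ) (hτ1 : τ ≤ 1) (hO : O ⊆ O')
    (hact : ∀ a ∈ I ∪ O ∪ O', actL L {a} ≠ 0)
    (h : AggUnderfed L I O τ) :
    AggUnderfed L I O' τ := by
  obtain ⟨a, ha, hlt⟩ := h
  have ha' : a ∈ I ∪ O' := by
    rcases Finset.mem_union.1 ha with h1 | h2
    · exact Finset.mem_union_left _ h1
    · exact Finset.mem_union_right _ (hO h2)
  refine ⟨a, ha', lt_of_lt_of_le hlt ?_⟩
  have hmono : ∀ σ : List A, Underfed I O σ → Underfed I O' σ := by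
    intro σ ⟨k, hk1, hk2, hk3⟩
    refine ⟨k, hk1, hk2, lt_of_lt_of_le hk3 ?_⟩
    unfold cnt
    apply List.countP_mono_left
    intro x _ hx
    simp only [decide_eq_true_eq] at hx ⊢
    exact hO hx
  have hsub : (actL L {a}) ∩ underfedL L I O ≤ (actL L {a}) ∩ underfedL L I O' := by
    apply Multiset.le_inter Multiset.inter_le_left
    refine le_trans Multiset.inter_le_right ?_
    unfold underfedL
    rw [Multiset.le_filter]
    exact ⟨Multiset.filter_le _ _, fun σ hσ => hmono σ (Multiset.of_mem_filter hσ)⟩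
  have hcard : ((actL L {a}) ∩ underfedL L I O).card ≤
      ((actL L {a}) ∩ underfedL L I O').card := Multiset.card_le_card hsub
  have hpos : (0 : ℝ) < ((actL L {a}).card : ℝ) := by
    have := hact a (by
      rcases Finset.mem_union.1 ha with h1 | h2
      · exact Finset.mem_union_left _ (Finset.mem_union_left _ h1)
      · exact Finset.mem_union_left _ (Finset.mem_union_right _ h2))
    have : 0 < (actL L {a}).card := Multiset.card_pos.2 this
    exact_mod_cast this
  exact div_le_div_of_nonneg_right (by exact_mod_cast hcard) hpos.le |>.trans_eq rfl
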